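/- Let X be a Polish space, C ⊆ X compact, and F: C × P(C) → R continuous. If F is monotone and satisfies the unique minimizer condition, then F has at most one equilibrium: if η̃ and η̃' both satisfy supp(η̃) ⊆ argmin_{x∈C} F(x,η̃) and supp(η̃') ⊆ argmin_{x∈C} F(x,η̃'), then η̃ = η̃'. -/

import Mathlib

open MeasureTheory Filter Topology

noncomputable section

/-- The topological support of a measure. -/
def msupp {X : Type*} [TopologicalSpace X] [MeasurableSpace X] (μ : Measure X) : Set X :=
  {x | ∀ U : Set X, IsOpen U → x ∈ U → 0 < μ U}

variable {X : Type*} [MetricSpace X] [CompleteSpace X] [TopologicalSpace.SeparableSpace X]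
  [MeasurableSpace X] [BorelSpace X]

/-- The set of (Borel) probability measures concentrated on `C`, identified with `P(C)`. -/
def PC (C : Set X) : Set (ProbabilityMeasure X) := {η | (η : Measure X) Cᶜ = 0}

lemma msupp_subset_dirac (η : ProbabilityMeasure X) (x₀ : X)
    (h : msupp (η : Measure X) ⊆ {x₀}) : (η : Measure X) = Measure.dirac x₀ := by
  have hcompl : (η : Measure X) {x₀}ᶜ = 0 := by
    apply measure_null_of_locally_null
    intro x hx
    have hx' : x ∉ msupp (η : Measure X) := fun hm => hx (h hm)
    simp only [msupp, Set.mem_setOf_eq, not_forall] at hx'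
    obtain ⟨U, hUopen, hxU, hU0⟩ := hx'
    exact ⟨U, nhdsWithin_le_nhds (hUopen.mem_nhds hxU),
      le_antisymm (le_of_not_gt hU0) zero_le⟩
  ext s hs
  rcases Classical.em (x₀ ∈ s) with hmem | hmem
  · have h1 : (η : Measure X) sᶜ = 0 := by
      refine measure_mono_null ?_ hcompl
      intro z hz
      simp only [Set.mem_compl_iff, Set.mem_singleton_iff] at hz ⊢
      intro h; exact hz (h ▸ hmem)
    have : (η : Measure X) s = 1 := by
      have := measure_add_measure_compl (μ := (η : Measure X)) hs
      rw [h1, add_zero] at this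
      simpa using this
    rw [this, Measure.dirac_apply' _ hs, Set.indicator_of_mem hmem]; rfl
  · have h0 : (η : Measure X) s = 0 := by
      refine measure_mono_null ?_ hcompl
      intro z hz
      simp only [Set.mem_compl_iff, Set.mem_singleton_iff]
      intro h; exact hmem (h ▸ hz)
    rw [h0, Measure.dirac_apply' _ hs, Set.indicator_of_notMem hmem]

/-- If `F` is monotone and satisfies the unique minimizer condition, then `F` has at most
one equilibrium. -/
theorem equilibrium_unique
    (C : Set X) (hC : IsCompact C) (hCne : C.Nonempty)
    (F : X → ProbabilityMeasure X → ℝ)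
    (hFcont : ContinuousOn (fun p : X × ProbabilityMeasure X => F p.1 p.2) (C ×ˢ PC C))
    (hmono : ∀ μ ∈ PC C, ∀ ν ∈ PC C, μ ≠ ν →
      0 ≤ (∫ x, (F x μ - F x ν) ∂(μ : Measure X)) - ∫ x, (F x μ - F x ν) ∂(ν : Measure X))
    (huniq : ∀ η ∈ PC C, ∃! x, x ∈ C ∧ ∀ y ∈ C, F x η ≤ F y η)
    (η η' : ProbabilityMeasure X) (hηC : η ∈ PC C) (hη'C : η' ∈ PC C)
    (hsupp : msupp (η : Measure X) ⊆ {x | x ∈ C ∧ ∀ y ∈ C, F x η ≤ F y η})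
    (hsupp' : msupp (η' : Measure X) ⊆ {x | x ∈ C ∧ ∀ y ∈ C, F x η' ≤ F y η'}) :
    η = η' := by
  by_contra hne
  obtain ⟨x₀, hx₀, hx₀uniq⟩ := huniq η hηC
  obtain ⟨x₁, hx₁, hx₁uniq⟩ := huniq η' hη'C
  have hηd : (η : Measure X) = Measure.dirac x₀ :=
    msupp_subset_dirac η x₀ (fun z hz => hx₀uniq z (hsupp hz))
  have hη'd : (η' : Measure X) = Measure.dirac x₁ :=
    msupp_subset_dirac η' x₁ (fun z hz => hx₁uniq z (hsupp' hz))
  have hmono' := hmono η hηC η' hη'C hne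
  rw [hηd, hη'd, integral_dirac, integral_dirac] at hmono'
  -- hmono' : 0 ≤ (F x₀ η - F x₀ η') - (F x₁ η - F x₁ η')
  have h1 : F x₀ η ≤ F x₁ η := hx₀.2 x₁ hx₁.1
  have h2 : F x₁ η' ≤ F x₀ η' := hx₁.2 x₀ hx₀.1
  have heq : F x₁ η = F x₀ η := le_antisymm (by linarith) h1
  have hx10 : x₁ = x₀ := hx₀uniq x₁ ⟨hx₁.1, fun y hy => heq ▸ hx₀.2 y hy⟩
  exact hne (ProbabilityMeasure.toMeasure_injective (by rw [hηd, hη'd, hx10]))
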